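/- arXiv:math/0310275 — 3 statements merged into one kernel-verified Lean document; each statement's English description precedes it below -/
import Mathlib

section
/- For every c ∈ Z_p^×, the power series λ_+·γ_c(λ_+)^{−1} and λ_−·γ_c(λ_−)^{−1} lie in 1 + π·Z_p[[π]]; that is, all their coefficients lie in Z_p and their constant coefficients equal 1. -/
open PowerSeries Filter Finset

noncomputable section

variable (p : ℕ) [Fact p.Prime]

/-- Substitution of a power series `g` (with zero constant coefficient in all our uses)
into a power series `f`: the coefficient of degree `j` of `f(g)` only involves the
monomials of `f` of degree `≤ j`. -/
def psSubst {A : Type*} [CommRing A] (g f : PowerSeries A) : PowerSeries A :=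
  PowerSeries.mk fun j => ∑ i ∈ Finset.range (j + 1),
    PowerSeries.coeff (R := A) i f * PowerSeries.coeff (R := A) j (g ^ i)

/-- The endomorphism `φ` of `A[[π]]`, substituting `(1+π)^p - 1` for `π`. -/
def phiA (A : Type*) [CommRing A] : PowerSeries A → PowerSeries A :=
  psSubst ((1 + PowerSeries.X) ^ p - 1)

/-- The binomial coefficient `binom(c, n)` for `c ∈ ℤ_p`, computed in `ℚ_p`. -/
def binomC (c : ℤ_[p]) (n : ℕ) : ℚ_[p] :=
  Polynomial.eval (c : ℚ_[p]) (descPochhammer ℚ_[p] n) / (n.factorial : ℚ_[p])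

/-- The binomial power series `(1+π)^c = ∑_{n≥0} binom(c,n) π^n` for `c ∈ ℤ_p`. -/
def onePlusPiPow (c : ℤ_[p]) : PowerSeries ℚ_[p] := PowerSeries.mk (binomC p c)

/-- The endomorphism `γ_c` of `ℚ_p[[π]]`, substituting `(1+π)^c - 1` for `π`. -/
def gammaQ (c : ℤ_[p]) : PowerSeries ℚ_[p] → PowerSeries ℚ_[p] :=
  psSubst (onePlusPiPow p c - 1)

/-- The partial products `∏_{n=0}^{N} φ^{2n+1}(q)/p` (whose limit is `λ₊`). -/
def partialPlus (q : PowerSeries ℚ_[p]) (N : ℕ) : PowerSeries ℚ_[p] :=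
  ∏ n ∈ Finset.range (N + 1), (p : ℚ_[p])⁻¹ • (phiA p ℚ_[p])^[2 * n + 1] q

/-- The partial products `∏_{n=0}^{N} φ^{2n}(q)/p` (whose limit is `λ₋`). -/
def partialMinus (q : PowerSeries ℚ_[p]) (N : ℕ) : PowerSeries ℚ_[p] :=
  ∏ n ∈ Finset.range (N + 1), (p : ℚ_[p])⁻¹ • (phiA p ℚ_[p])^[2 * n] q

/-- Convergence in `ℚ_p[[π]]` for the topology of coefficientwise convergence. -/
def CoeffTendsto (F : ℕ → PowerSeries ℚ_[p]) (L : PowerSeries ℚ_[p]) : Prop :=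
  ∀ d : ℕ, Filter.Tendsto (fun N => PowerSeries.coeff (R := ℚ_[p]) d (F N))
    Filter.atTop (nhds (PowerSeries.coeff (R := ℚ_[p]) d L))

/-- A power series with `ℚ_p` coefficients has all its coefficients in `ℤ_p`. -/
def IntSeries (f : PowerSeries ℚ_[p]) : Prop := ∀ n, ‖PowerSeries.coeff (R := ℚ_[p]) n f‖ ≤ 1

/-- Membership in the ring `R` of series `∑ a_i π^i` with `v_p(a_i) + i/(p-1) ≥ 0`,
expressed via norms: `‖a_i‖ ≤ p^{i/(p-1)}`. -/
def memR (f : PowerSeries ℚ_[p]) : Prop :=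
  ∀ i : ℕ, ‖PowerSeries.coeff (R := ℚ_[p]) i f‖ ≤ (p : ℝ) ^ ((i : ℝ) / ((p : ℝ) - 1))

/-- The series `p^m λ₋^{k-1} λ₊^{-(k-1)}`, where `m = ⌊(k-2)/(p-1)⌋`. -/
def zFull (k : ℕ) (lamPlus lamMinus : PowerSeries ℚ_[p]) : PowerSeries ℚ_[p] :=
  (p : PowerSeries ℚ_[p]) ^ ((k - 2) / (p - 1)) * lamMinus ^ (k - 1) * lamPlus⁻¹ ^ (k - 1)

/-- The truncation `z = z_0 + z_1 π + ⋯ + z_{k-2} π^{k-2}` of `p^m λ₋^{k-1} λ₊^{-(k-1)}`. -/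
def zSeries (k : ℕ) (lamPlus lamMinus : PowerSeries ℚ_[p]) : PowerSeries ℚ_[p] :=
  PowerSeries.mk fun i =>
    if i ≤ k - 2 then PowerSeries.coeff (R := ℚ_[p]) i (zFull p k lamPlus lamMinus) else 0

/-- The two-variable power series ring `ℚ_p[[π, X]]`, realized as `(ℚ_p[[π]])[[X]]`:
the inner variable is `π` and the outer variable is `X`. -/
abbrev PS2 := PowerSeries (PowerSeries ℚ_[p])

/-- `φ` extended to `ℚ_p[[π, X]]`, acting as before on `π` and trivially on `X`. -/
def phi2 : PS2 p → PS2 p := fun F =>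
  PowerSeries.mk fun n => phiA p ℚ_[p] (PowerSeries.coeff (R := (PowerSeries ℚ_[p])) n F)

/-- `γ_c` extended to `ℚ_p[[π, X]]`, acting as before on `π` and trivially on `X`. -/
def gamma2 (c : ℤ_[p]) : PS2 p → PS2 p := fun F =>
  PowerSeries.mk fun n => gammaQ p c (PowerSeries.coeff (R := (PowerSeries ℚ_[p])) n F)

/-- A two-variable power series has all its coefficients in `ℤ_p`,
i.e. lies in `ℤ_p[[π, X]]`. -/
def IntSeries2 (F : PS2 p) : Prop :=
  ∀ n j, ‖PowerSeries.coeff (R := ℚ_[p]) j (PowerSeries.coeff (R := (PowerSeries ℚ_[p])) n F)‖ ≤ 1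

/-- The element `π` of `ℚ_p[[π, X]]`. -/
def piVar : PS2 p := PowerSeries.C (R := PowerSeries ℚ_[p]) PowerSeries.X

/-- The matrix `P(X)` with rows `(0, -1)` and `(q^{k-1}, X·z)`. -/
def Pmat (k : ℕ) (q z : PowerSeries ℚ_[p]) : Matrix (Fin 2) (Fin 2) (PS2 p) :=
  !![0, -1;
     PowerSeries.C (R := PowerSeries ℚ_[p]) (q ^ (k - 1)),
       PowerSeries.X * PowerSeries.C (R := PowerSeries ℚ_[p]) z]

/-- A matrix has entries in `ℤ_p[[π, X]]`. -/
def IntMat (H : Matrix (Fin 2) (Fin 2) (PS2 p)) : Prop := ∀ i j, IntSeries2 p (H i j)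

/-- A matrix is `≡ Id mod π`, i.e. `H - Id ∈ π · M₂(ℤ_p[[π, X]])`. -/
def ModPiId (H : Matrix (Fin 2) (Fin 2) (PS2 p)) : Prop :=
  ∃ H' : Matrix (Fin 2) (Fin 2) (PS2 p), IntMat p H' ∧ H = 1 + piVar p • H'

/-- The conditions satisfied by the matrix `G_c(X)`:
entries in `ℤ_p[[π,X]]`, `G ≡ Id mod π`, and `P(X)·φ(G) = G·γ_c(P(X))`. -/
def IsGmat (k : ℕ) (q z : PowerSeries ℚ_[p]) (c : ℤ_[p])
    (G : Matrix (Fin 2) (Fin 2) (PS2 p)) : Prop :=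
  IntMat p G ∧ ModPiId p G ∧
    Pmat p k q z * G.map (phi2 p) = G * (Pmat p k q z).map (gamma2 p c)

/-- The matrix `P₀` with rows `(0, -1)` and `(p^{k-1}, p^m X)`, `m = ⌊(k-2)/(p-1)⌋`. -/
def P0mat (k : ℕ) : Matrix (Fin 2) (Fin 2) (PowerSeries ℤ_[p]) :=
  !![0, -1;
     (p : PowerSeries ℤ_[p]) ^ (k - 1),
       (p : PowerSeries ℤ_[p]) ^ ((k - 2) / (p - 1)) * PowerSeries.X]

section Efield

variable (E : Type*) [NormedField E] [NormedAlgebra ℚ_[p] E] [IsUltrametricDist E]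

/-- The ring of integers `O_E` of `E`: the elements of norm at most `1`. -/
def ringOfInt : Subring E where
  carrier := {x : E | ‖x‖ ≤ 1}
  zero_mem' := by simp
  one_mem' := by simp
  add_mem' {a b} ha hb := le_trans (IsUltrametricDist.norm_add_le_max a b) (max_le ha hb)
  neg_mem' {a} ha := by simpa using ha
  mul_mem' {a b} ha hb := by
    have h := norm_mul a b
    simp only [Set.mem_setOf_eq] at *
    nlinarith [norm_nonneg a, norm_nonneg b]

/-- Evaluation `ev_α : ℚ_p[[π, X]] → E[[π]]` substituting `α` for `X`. -/
def evalX (α : E) (F : PS2 p) : PowerSeries E :=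
  PowerSeries.mk fun j =>
    ∑' n : ℕ, algebraMap ℚ_[p] E
      (PowerSeries.coeff (R := ℚ_[p]) j (PowerSeries.coeff (R := (PowerSeries ℚ_[p])) n F)) * α ^ n

/-- `γ_c` on `E[[π]]`: substitution of `(1+π)^c - 1` for `π` (coefficients mapped to `E`). -/
def gammaE (c : ℤ_[p]) : PowerSeries E → PowerSeries E :=
  psSubst ((onePlusPiPow p c).map (algebraMap ℚ_[p] E) - 1)

end Efield

end

noncomputable section AuxProofs
set_option linter.unusedSectionVars false

namespace Aux

variable {A : Type*} [CommRing A] {g : PowerSeries A}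

theorem coeff_pow_eq_zero (hg : constantCoeff (R := A) g = 0) :
    ∀ i j : ℕ, j < i → coeff (R := A) j (g ^ i) = 0 := by
  intro i
  induction i with
  | zero => intro j hj; omega
  | succ i ih =>
    intro j hj
    rw [pow_succ, coeff_mul]
    apply Finset.sum_eq_zero
    rintro ⟨a, b⟩ hab
    rw [Finset.HasAntidiagonal.mem_antidiagonal] at hab
    rcases Nat.eq_zero_or_pos b with hb | hb
    · subst hb
      simp only [coeff_zero_eq_constantCoeff, hg, mul_zero]
    · have ha : a < i := by omega
      simp only [ih a ha, zero_mul]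

theorem coeff_psSubst (hg : constantCoeff (R := A) g = 0) (f : PowerSeries A) (j N : ℕ)
    (hN : j < N) :
    coeff (R := A) j (psSubst g f) = ∑ i ∈ Finset.range N, coeff (R := A) i f * coeff (R := A) j (g ^ i) := by
  rw [psSubst, coeff_mk]
  apply Finset.sum_subset
  · exact Finset.range_subset_range.2 hN
  · intro i hi hi'
    rw [Finset.mem_range] at hi hi'
    rw [coeff_pow_eq_zero hg i j (by omega), mul_zero]

end Aux

namespace Aux2
open Aux
variable {A : Type*} [CommRing A] {g : PowerSeries A}

theorem triangle_sum (t : ℕ → ℕ → A) (j : ℕ) (ht : ∀ a b, j < a + b → t a b = 0) :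
    ∑ i ∈ range (j+1), ∑ ab ∈ antidiagonal i, t ab.1 ab.2
      = ∑ a ∈ range (j+1), ∑ b ∈ range (j+1), t a b := by
  have key : ∀ i ∈ range (j+1), antidiagonal i
      = (range (j+1) ×ˢ range (j+1)).filter (fun ab => ab.1 + ab.2 = i) := by
    intro i hi
    rw [mem_range] at hi
    ext ⟨a, b⟩
    simp only [Finset.HasAntidiagonal.mem_antidiagonal, mem_filter, mem_product, mem_range]
    omega
  have this2 : ∀ ab ∈ range (j+1) ×ˢ range (j+1),
      (∑ i ∈ range (j+1), if ab.1 + ab.2 = i then t ab.1 ab.2 else 0) = t ab.1 ab.2 := by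
    rintro ⟨a, b⟩ _
    rw [Finset.sum_ite_eq (range (j+1)) (a + b) (fun _ => t a b)]
    by_cases h : a + b ≤ j
    · rw [if_pos (mem_range.2 (by omega))]
    · rw [ht a b (by omega)]
      simp
  rw [Finset.sum_congr rfl fun i hi => by rw [key i hi, Finset.sum_filter], Finset.sum_comm,
    Finset.sum_congr rfl this2, Finset.sum_product]

theorem psSubst_mul (hg : constantCoeff (R := A) g = 0) (f₁ f₂ : PowerSeries A) :
    psSubst g (f₁ * f₂) = psSubst g f₁ * psSubst g f₂ := by
  ext j
  have hvan : ∀ a b : ℕ, j < a + b →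
      coeff (R := A) a f₁ * coeff (R := A) b f₂ * coeff (R := A) j (g ^ (a + b)) = 0 := fun a b h => by
    rw [coeff_pow_eq_zero hg _ _ h, mul_zero]
  rw [coeff_psSubst hg _ j (j+1) (by omega), coeff_mul]
  calc ∑ i ∈ range (j+1), coeff (R := A) i (f₁ * f₂) * coeff (R := A) j (g ^ i)
      = ∑ i ∈ range (j+1), ∑ ab ∈ antidiagonal i,
          coeff (R := A) ab.1 f₁ * coeff (R := A) ab.2 f₂ * coeff (R := A) j (g ^ (ab.1 + ab.2)) := by
        refine Finset.sum_congr rfl fun i _ => ?_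
        rw [coeff_mul, Finset.sum_mul]
        exact Finset.sum_congr rfl fun ab hab => by
          rw [Finset.HasAntidiagonal.mem_antidiagonal.1 hab]
    _ = ∑ a ∈ range (j+1), ∑ b ∈ range (j+1),
          coeff (R := A) a f₁ * coeff (R := A) b f₂ * coeff (R := A) j (g ^ (a + b)) :=
        triangle_sum _ j hvan
    _ = ∑ rs ∈ antidiagonal j, coeff (R := A) rs.1 (psSubst g f₁) * coeff (R := A) rs.2 (psSubst g f₂) := by
        have this1 : ∀ rs ∈ antidiagonal j,
            coeff (R := A) rs.1 (psSubst g f₁) * coeff (R := A) rs.2 (psSubst g f₂)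
            = ∑ a ∈ range (j+1), ∑ b ∈ range (j+1),
                (coeff (R := A) a f₁ * coeff (R := A) rs.1 (g ^ a)) * (coeff (R := A) b f₂ * coeff (R := A) rs.2 (g ^ b)) := by
          rintro ⟨r, s⟩ hrs
          rw [Finset.HasAntidiagonal.mem_antidiagonal] at hrs
          rw [coeff_psSubst hg f₁ r (j+1) (by omega), coeff_psSubst hg f₂ s (j+1) (by omega),
            Finset.sum_mul_sum]
        symm
        calc ∑ rs ∈ antidiagonal j, coeff (R := A) rs.1 (psSubst g f₁) * coeff (R := A) rs.2 (psSubst g f₂)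
            = ∑ rs ∈ antidiagonal j, ∑ a ∈ range (j+1), ∑ b ∈ range (j+1),
                (coeff (R := A) a f₁ * coeff (R := A) rs.1 (g ^ a)) * (coeff (R := A) b f₂ * coeff (R := A) rs.2 (g ^ b)) :=
              Finset.sum_congr rfl this1
          _ = ∑ a ∈ range (j+1), ∑ rs ∈ antidiagonal j, ∑ b ∈ range (j+1),
                (coeff (R := A) a f₁ * coeff (R := A) rs.1 (g ^ a)) * (coeff (R := A) b f₂ * coeff (R := A) rs.2 (g ^ b)) :=
              Finset.sum_comm
          _ = ∑ a ∈ range (j+1), ∑ b ∈ range (j+1), ∑ rs ∈ antidiagonal j,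
                (coeff (R := A) a f₁ * coeff (R := A) rs.1 (g ^ a)) * (coeff (R := A) b f₂ * coeff (R := A) rs.2 (g ^ b)) :=
              Finset.sum_congr rfl fun a _ => Finset.sum_comm
          _ = ∑ a ∈ range (j+1), ∑ b ∈ range (j+1),
                coeff (R := A) a f₁ * coeff (R := A) b f₂ * coeff (R := A) j (g ^ (a + b)) := by
              refine Finset.sum_congr rfl fun a _ => Finset.sum_congr rfl fun b _ => ?_
              rw [pow_add, coeff_mul, Finset.mul_sum]
              exact Finset.sum_congr rfl fun rs _ => by ring

theorem psSubst_add (f₁ f₂ : PowerSeries A) :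
    psSubst g (f₁ + f₂) = psSubst g f₁ + psSubst g f₂ := by
  ext j
  simp [psSubst, Finset.sum_add_distrib, add_mul]

theorem psSubst_C (hg : constantCoeff (R := A) g = 0) (a : A) :
    psSubst g (C (R := A) a) = C (R := A) a := by
  ext j
  rw [psSubst, coeff_mk]
  rw [Finset.sum_eq_single 0]
  · simp [coeff_C]
  · intro i hi hi0
    simp [coeff_C, hi0]
  · simp

theorem psSubst_one (hg : constantCoeff (R := A) g = 0) : psSubst g (1 : PowerSeries A) = 1 := by
  simpa using psSubst_C hg 1

theorem psSubst_X (hg : constantCoeff (R := A) g = 0) : psSubst g (X : PowerSeries A) = g := by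
  ext j
  rw [psSubst, coeff_mk]
  rcases Nat.eq_zero_or_pos j with rfl | hj
  · simp [coeff_X, hg]
  · rw [Finset.sum_eq_single 1]
    · simp
    · intro i hi hi1
      simp [coeff_X, hi1]
    · intro h
      simp at h
      omega

/-- `psSubst g` bundled as a ring homomorphism, given `constantCoeff g = 0`. -/
def psSubstHom (hg : constantCoeff (R := A) g = 0) : PowerSeries A →+* PowerSeries A where
  toFun := psSubst g
  map_one' := psSubst_one hg
  map_mul' := psSubst_mul hg
  map_zero' := by
    show psSubst g 0 = 0
    ext j
    rw [psSubst, coeff_mk]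
    simp
  map_add' := psSubst_add

theorem psSubst_constantCoeff (f : PowerSeries A) :
    constantCoeff (R := A) (psSubst g f) = constantCoeff (R := A) f := by
  rw [← coeff_zero_eq_constantCoeff_apply, ← coeff_zero_eq_constantCoeff_apply,
    psSubst, coeff_mk]
  simp

theorem psSubst_comp {a b : PowerSeries A} (ha : constantCoeff (R := A) a = 0)
    (hb : constantCoeff (R := A) b = 0) (f : PowerSeries A) :
    psSubst a (psSubst b f) = psSubst (psSubst a b) f := by
  have hba : constantCoeff (R := A) (psSubst a b) = 0 := by
    rw [psSubst_constantCoeff b, hb]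
  ext j
  rw [coeff_psSubst ha _ j (j+1) (by omega), coeff_psSubst hba _ j (j+1) (by omega)]
  calc ∑ i ∈ range (j+1), coeff (R := A) i (psSubst b f) * coeff (R := A) j (a ^ i)
      = ∑ i ∈ range (j+1), ∑ k ∈ range (j+1),
          coeff (R := A) k f * coeff (R := A) i (b ^ k) * coeff (R := A) j (a ^ i) := by
        refine Finset.sum_congr rfl fun i hi => ?_
        rw [mem_range] at hi
        rw [coeff_psSubst hb f i (j+1) (by omega), Finset.sum_mul]
    _ = ∑ k ∈ range (j+1), coeff (R := A) k f * coeff (R := A) j ((psSubst a b) ^ k) := by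
        rw [Finset.sum_comm]
        refine Finset.sum_congr rfl fun k _ => ?_
        have : ((psSubst a b) : PowerSeries A) ^ k = psSubst a (b ^ k) :=
          (show psSubst a (b ^ k) = (psSubst a b) ^ k from map_pow (psSubstHom ha) b k).symm
        rw [this, coeff_psSubst ha _ j (j+1) (by omega), Finset.mul_sum]
        exact Finset.sum_congr rfl fun i _ => by ring

end Aux2

section Qp

variable {A : Type*} [CommRing A]

theorem coeff_one_add_X_pow (m j : ℕ) :
    coeff (R := A) j ((1 + X) ^ m) = (m.choose j : A) := by
  rw [add_comm (1 : PowerSeries A) X, add_pow, map_sum]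
  have h : ∀ k ∈ range (m+1), coeff (R := A) j (X ^ k * 1 ^ (m - k) * ((m.choose k : ℕ) : PowerSeries A))
      = if j = k then (m.choose k : A) else 0 := by
    intro k _
    rw [one_pow, mul_one, ← map_natCast (C (R := A)) (m.choose k), coeff_mul_C, coeff_X_pow]
    by_cases h : j = k <;> simp [h]
  rw [Finset.sum_congr rfl h, Finset.sum_ite_eq (range (m+1)) j]
  by_cases hj : j ≤ m
  · rw [if_pos (mem_range.2 (by omega))]
  · rw [if_neg (by simp only [mem_range]; omega), Nat.choose_eq_zero_of_lt (by omega),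
      Nat.cast_zero]

theorem psSubst_map {B : Type*} [CommRing B] (σ : A →+* B) (g f : PowerSeries A) :
    PowerSeries.map σ (psSubst g f) = psSubst (PowerSeries.map σ g) (PowerSeries.map σ f) := by
  ext j
  rw [coeff_map, psSubst, psSubst, coeff_mk, coeff_mk, map_sum]
  refine Finset.sum_congr rfl fun i _ => ?_
  rw [map_mul, coeff_map, ← map_pow, coeff_map]

end Qp

namespace Aux3
variable (p : ℕ) [Fact p.Prime]
open Aux Aux2

/-- The universal binomial series with polynomial coefficients. -/
def Apoly : PowerSeries (Polynomial ℚ_[p]) :=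
  PowerSeries.mk fun n => ((n.factorial : ℚ_[p])⁻¹) • descPochhammer ℚ_[p] n

theorem map_Apoly (x : ℚ_[p]) :
    PowerSeries.map (Polynomial.evalRingHom x) (Apoly p)
      = PowerSeries.mk (fun n => Polynomial.eval x (descPochhammer ℚ_[p] n)
          / (n.factorial : ℚ_[p])) := by
  ext n
  rw [coeff_map, Apoly, coeff_mk, coeff_mk]
  simp [Polynomial.eval_smul, div_eq_inv_mul, smul_eq_mul]

theorem map_Apoly_nat (m : ℕ) :
    PowerSeries.map (Polynomial.evalRingHom ((m : ℚ_[p]))) (Apoly p) = (1 + X) ^ m := by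
  rw [map_Apoly]
  ext n
  rw [coeff_mk, coeff_one_add_X_pow]
  rw [descPochhammer_eval_eq_descFactorial, Nat.descFactorial_eq_factorial_mul_choose]
  push_cast
  rw [mul_comm, mul_div_assoc, div_self (by exact_mod_cast (Nat.factorial_ne_zero n)), mul_one]

theorem map_Apoly_c (c : ℤ_[p]) :
    PowerSeries.map (Polynomial.evalRingHom ((c : ℚ_[p]))) (Apoly p) = onePlusPiPow p c := by
  rw [map_Apoly]
  ext n
  rw [coeff_mk, onePlusPiPow, coeff_mk, binomC]

/-- `(1+π)^p - 1` over any commutative ring. -/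
def gp (A : Type*) [CommRing A] : PowerSeries A := (1 + X) ^ p - 1

theorem constantCoeff_gp (A : Type*) [CommRing A] : constantCoeff (R := A) (gp p A) = 0 := by
  rw [gp, map_sub, ← coeff_zero_eq_constantCoeff_apply, coeff_one_add_X_pow]
  simp

theorem map_gp {A B : Type*} [CommRing A] [CommRing B] (σ : A →+* B) :
    PowerSeries.map σ (gp p A) = gp p B := by
  rw [gp, gp]
  simp

theorem eval_coeff (x : ℚ_[p]) (F : PowerSeries (Polynomial ℚ_[p])) (j : ℕ) :
    Polynomial.eval x (coeff (R := (Polynomial ℚ_[p])) j F)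
      = coeff (R := ℚ_[p]) j (PowerSeries.map (Polynomial.evalRingHom x) F) := by
  rw [coeff_map]; rfl

/-- The key binomial identity: `((1+π)^p)^c = ((1+π)^c)^p`. -/
theorem key_binom (c : ℤ_[p]) :
    psSubst (gp p ℚ_[p]) (onePlusPiPow p c) = (onePlusPiPow p c) ^ p := by
  have main : psSubst (gp p (Polynomial ℚ_[p])) (Apoly p) = (Apoly p) ^ p := by
    refine PowerSeries.ext fun j => ?_
    apply Polynomial.eq_of_infinite_eval_eq
    apply Set.Infinite.mono (s := Set.range (Nat.cast : ℕ → ℚ_[p]))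
    · rintro x ⟨m, rfl⟩
      show Polynomial.eval _ _ = Polynomial.eval _ _
      have h1 : Polynomial.eval ((m : ℚ_[p])) (coeff (R := (Polynomial ℚ_[p])) j
          (psSubst (gp p (Polynomial ℚ_[p])) (Apoly p)))
          = coeff (R := ℚ_[p]) j ((1 + X : PowerSeries ℚ_[p]) ^ (p * m)) := by
        rw [eval_coeff]
        rw [psSubst_map, map_gp, map_Apoly_nat]
        rw [show psSubst (gp p ℚ_[p]) ((1 + X) ^ m) = (psSubst (gp p ℚ_[p]) (1 + X)) ^ m from
          map_pow (psSubstHom (constantCoeff_gp p ℚ_[p])) _ m]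
        rw [show psSubst (gp p ℚ_[p]) (1 + X) = 1 + gp p ℚ_[p] from by
          rw [psSubst_add, psSubst_one (constantCoeff_gp p ℚ_[p]),
            psSubst_X (constantCoeff_gp p ℚ_[p])]]
        rw [gp, add_sub_cancel, ← pow_mul]
      have h2 : Polynomial.eval ((m : ℚ_[p])) (coeff (R := (Polynomial ℚ_[p])) j ((Apoly p) ^ p))
          = coeff (R := ℚ_[p]) j ((1 + X : PowerSeries ℚ_[p]) ^ (m * p)) := by
        rw [eval_coeff]
        rw [map_pow, map_Apoly_nat, ← pow_mul]
      show Polynomial.eval _ _ = Polynomial.eval _ _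
      rw [h1, h2, Nat.mul_comm]
    · exact Set.infinite_range_of_injective Nat.cast_injective
  have := congrArg (PowerSeries.map (Polynomial.evalRingHom ((c : ℚ_[p])))) main
  rw [psSubst_map, map_gp, map_Apoly_c, map_pow, map_Apoly_c] at this
  exact this

end Aux3

namespace Aux4
open Aux Aux2 Aux3

variable (p : ℕ) [Fact p.Prime]

theorem norm_sum_le_one {ι : Type*} {s : Finset ι} {f : ι → ℚ_[p]}
    (h : ∀ i ∈ s, ‖f i‖ ≤ 1) : ‖∑ i ∈ s, f i‖ ≤ 1 :=
  IsUltrametricDist.norm_sum_le_of_forall_le_of_nonneg zero_le_one h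

theorem intSeries_mul {f g : PowerSeries ℚ_[p]} (hf : IntSeries p f) (hg : IntSeries p g) :
    IntSeries p (f * g) := by
  intro n
  rw [coeff_mul]
  refine norm_sum_le_one p fun ab _ => ?_
  rw [norm_mul]
  exact mul_le_one₀ (hf ab.1) (norm_nonneg _) (hg ab.2)

theorem intSeries_one : IntSeries p (1 : PowerSeries ℚ_[p]) := by
  intro n
  rw [coeff_one]
  split <;> simp

theorem intSeries_pow {f : PowerSeries ℚ_[p]} (hf : IntSeries p f) (k : ℕ) :
    IntSeries p (f ^ k) := by
  induction k with
  | zero => simpa using intSeries_one p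
  | succ k ih => rw [pow_succ]; exact intSeries_mul p ih hf

theorem intSeries_prod {ι : Type*} (s : Finset ι) (f : ι → PowerSeries ℚ_[p])
    (hf : ∀ i ∈ s, IntSeries p (f i)) : IntSeries p (∏ i ∈ s, f i) := by
  classical
  induction s using Finset.induction_on with
  | empty => simpa using intSeries_one p
  | insert _ _ hnot ih =>
    rw [Finset.prod_insert hnot]
    exact intSeries_mul p (hf _ (Finset.mem_insert_self _ _))
      (ih fun i hi => hf i (Finset.mem_insert_of_mem hi))

theorem norm_natCast_le_one (n : ℕ) : ‖(n : ℚ_[p])‖ ≤ 1 := by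
  have := Padic.norm_int_le_one (p := p) (n : ℤ)
  push_cast at this
  exact this

theorem intSeries_psSubst {g f : PowerSeries ℚ_[p]} (hg : IntSeries p g)
    (hf : IntSeries p f) : IntSeries p (psSubst g f) := by
  intro n
  rw [psSubst, coeff_mk]
  refine norm_sum_le_one p fun i _ => ?_
  rw [norm_mul]
  exact mul_le_one₀ (hf i) (norm_nonneg _) (intSeries_pow p hg i n)

theorem intSeries_gp : IntSeries p (gp p ℚ_[p]) := by
  intro n
  rw [gp, map_sub, coeff_one_add_X_pow]
  have h1 : ‖((p.choose n : ℕ) : ℚ_[p])‖ ≤ 1 := norm_natCast_le_one p _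
  have h2 : ‖coeff (R := ℚ_[p]) n 1‖ ≤ 1 := intSeries_one p n
  rw [sub_eq_add_neg]
  calc ‖((p.choose n : ℕ) : ℚ_[p]) + -(coeff (R := ℚ_[p]) n 1)‖
      ≤ max ‖((p.choose n : ℕ) : ℚ_[p])‖ ‖-(coeff (R := ℚ_[p]) n 1)‖ :=
        IsUltrametricDist.norm_add_le_max _ _
    _ ≤ 1 := max_le h1 (by rwa [norm_neg])

theorem intSeries_inv {f : PowerSeries ℚ_[p]} (hf : IntSeries p f)
    (h0 : ‖constantCoeff (R := ℚ_[p]) f‖ = 1) : IntSeries p f⁻¹ := by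
  intro n
  induction n using Nat.strong_induction_on with
  | _ n ih =>
    rw [PowerSeries.coeff_inv]
    split
    · rw [norm_inv, h0]; norm_num
    · rw [norm_mul, norm_neg, norm_inv, h0, inv_one, one_mul]
      refine norm_sum_le_one p fun ab _ => ?_
      split
      · rename_i hlt
        rw [norm_mul]
        exact mul_le_one₀ (hf ab.1) (norm_nonneg _) (ih ab.2 hlt)
      · simp

theorem norm_binomC_le (c : ℤ_[p]) (n : ℕ) : ‖binomC p c n‖ ≤ 1 := by
  set F : ℤ_[p] → ℚ_[p] := fun z =>
    Polynomial.eval (z : ℚ_[p]) (descPochhammer ℚ_[p] n) / (n.factorial : ℚ_[p]) with hF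
  have hcont : Continuous F := by
    apply Continuous.div_const
    exact (descPochhammer ℚ_[p] n).continuous.comp continuous_subtype_val
  have hclosed : IsClosed {z : ℤ_[p] | ‖F z‖ ≤ 1} :=
    IsClosed.preimage hcont.norm isClosed_Iic
  have hnat : Set.range (Nat.cast : ℕ → ℤ_[p]) ⊆ {z : ℤ_[p] | ‖F z‖ ≤ 1} := by
    rintro x ⟨m, rfl⟩
    have hx : (((m : ℤ_[p]) : ℚ_[p])) = (m : ℚ_[p]) := by push_cast; rfl
    have : F (m : ℤ_[p]) = ((m.choose n : ℕ) : ℚ_[p]) := by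
      rw [hF]
      simp only
      rw [hx, descPochhammer_eval_eq_descFactorial, Nat.descFactorial_eq_factorial_mul_choose]
      push_cast
      rw [mul_comm, mul_div_assoc, div_self (by exact_mod_cast (Nat.factorial_ne_zero n)), mul_one]
    rw [Set.mem_setOf_eq, this]
    exact norm_natCast_le_one p _
  have hdense := PadicInt.denseRange_natCast (p := p)
  have : closure (Set.range (Nat.cast : ℕ → ℤ_[p])) ⊆ {z : ℤ_[p] | ‖F z‖ ≤ 1} :=
    closure_minimal hnat hclosed
  have hc : c ∈ {z : ℤ_[p] | ‖F z‖ ≤ 1} := this (by rw [hdense.closure_eq]; trivial)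
  exact hc

end Aux4

namespace Aux5
open Aux Aux2 Aux3 Aux4

variable (p : ℕ) [Fact p.Prime]

theorem binomC_zero (c : ℤ_[p]) : binomC p c 0 = 1 := by
  rw [binomC, descPochhammer_zero]
  simp

theorem binomC_one (c : ℤ_[p]) : binomC p c 1 = (c : ℚ_[p]) := by
  rw [binomC, descPochhammer_one]
  simp

/-- The series `u` with `(1+π)^c - 1 = π·u`. -/
def uSer (c : ℤ_[p]) : PowerSeries ℚ_[p] := PowerSeries.mk fun n => binomC p c (n + 1)

theorem X_mul_uSer (c : ℤ_[p]) : X * uSer p c = onePlusPiPow p c - 1 := by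
  ext n
  cases n with
  | zero =>
    rw [coeff_zero_eq_constantCoeff_apply, coeff_zero_eq_constantCoeff_apply]
    rw [map_sub, map_mul, constantCoeff_X, zero_mul]
    rw [show constantCoeff (R := ℚ_[p]) (onePlusPiPow p c) = binomC p c 0 from rfl, binomC_zero]
    simp
  | succ n =>
    rw [coeff_succ_X_mul, map_sub, uSer, coeff_mk, onePlusPiPow, coeff_mk,
      coeff_one, if_neg (Nat.succ_ne_zero n), sub_zero]

theorem constantCoeff_uSer (c : ℤ_[p]) : constantCoeff (R := ℚ_[p]) (uSer p c) = (c : ℚ_[p]) := by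
  rw [show constantCoeff (R := ℚ_[p]) (uSer p c) = binomC p c 1 from rfl, binomC_one]

theorem intSeries_uSer (c : ℤ_[p]) : IntSeries p (uSer p c) := fun n => by
  rw [uSer, coeff_mk]
  exact norm_binomC_le p c (n + 1)

theorem constantCoeff_h (c : ℤ_[p]) : constantCoeff (R := ℚ_[p]) (onePlusPiPow p c - 1) = 0 := by
  rw [map_sub, show constantCoeff (R := ℚ_[p]) (onePlusPiPow p c) = binomC p c 0 from rfl, binomC_zero]
  simp

theorem phiA_eq (f : PowerSeries ℚ_[p]) : phiA p ℚ_[p] f = psSubst (gp p ℚ_[p]) f := rfl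

theorem gammaQ_eq (c : ℤ_[p]) (f : PowerSeries ℚ_[p]) :
    gammaQ p c f = psSubst (onePlusPiPow p c - 1) f := rfl

/-- `γ_c((1+π)^p - 1) = (1+π)^{cp} - 1`. -/
theorem gamma_gp (c : ℤ_[p]) :
    psSubst (onePlusPiPow p c - 1) (gp p ℚ_[p]) = (onePlusPiPow p c) ^ p - 1 := by
  have hh0 := constantCoeff_h p c
  have h1 : ∀ f, psSubst (onePlusPiPow p c - 1) f = psSubstHom hh0 f := fun _ => rfl
  rw [gp, h1, map_sub, map_pow, map_add, map_one,
    show psSubstHom hh0 X = onePlusPiPow p c - 1 from psSubst_X hh0, add_sub_cancel]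

end Aux5

namespace Aux6
open Aux Aux2 Aux3 Aux4 Aux5

variable (p : ℕ) [Fact p.Prime]

/-- `φ` and `γ_c` commute. -/
theorem phi_gamma_comm (c : ℤ_[p]) (f : PowerSeries ℚ_[p]) :
    phiA p ℚ_[p] (gammaQ p c f) = gammaQ p c (phiA p ℚ_[p] f) := by
  have hg0 := constantCoeff_gp p ℚ_[p]
  have hh0 := constantCoeff_h p c
  rw [phiA_eq, gammaQ_eq, gammaQ_eq, phiA_eq]
  rw [psSubst_comp hg0 hh0, psSubst_comp hh0 hg0]
  congr 1
  have e1 : psSubst (gp p ℚ_[p]) (onePlusPiPow p c - 1) = (onePlusPiPow p c) ^ p - 1 := by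
    have h1 : ∀ f, psSubst (gp p ℚ_[p]) f = psSubstHom hg0 f := fun _ => rfl
    rw [h1, map_sub, map_one, show psSubstHom hg0 (onePlusPiPow p c)
      = (onePlusPiPow p c) ^ p from key_binom p c]
  rw [e1, gamma_gp]

/-- The fundamental identity `q · φ(u) = u · γ_c(q)`. -/
theorem qu_identity (q : PowerSeries ℚ_[p]) (hq : X * q = (1 + X) ^ p - 1) (c : ℤ_[p]) :
    q * phiA p ℚ_[p] (uSer p c) = uSer p c * gammaQ p c q := by
  have hg0 := constantCoeff_gp p ℚ_[p]
  have hh0 := constantCoeff_h p c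
  have hphi : ∀ f, phiA p ℚ_[p] f = psSubstHom hg0 f := fun _ => rfl
  have hgam : ∀ f, gammaQ p c f = psSubstHom hh0 f := fun _ => rfl
  have hgp : X * q = gp p ℚ_[p] := hq
  have e1 : X * (q * phiA p ℚ_[p] (uSer p c)) = (onePlusPiPow p c) ^ p - 1 := by
    have : phiA p ℚ_[p] (X * uSer p c) = gp p ℚ_[p] * phiA p ℚ_[p] (uSer p c) := by
      rw [hphi, hphi, map_mul, show psSubstHom hg0 X = gp p ℚ_[p] from psSubst_X hg0]
    rw [← mul_assoc, hgp]
    rw [show gp p ℚ_[p] * phiA p ℚ_[p] (uSer p c) = phiA p ℚ_[p] (X * uSer p c) from this.symm]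
    rw [X_mul_uSer, hphi, map_sub, map_one,
      show psSubstHom hg0 (onePlusPiPow p c) = (onePlusPiPow p c) ^ p from key_binom p c]
  have e2 : X * (uSer p c * gammaQ p c q) = (onePlusPiPow p c) ^ p - 1 := by
    have : gammaQ p c (X * q) = (onePlusPiPow p c - 1) * gammaQ p c q := by
      rw [hgam, hgam, map_mul, show psSubstHom hh0 X = onePlusPiPow p c - 1 from psSubst_X hh0]
    rw [← mul_assoc, X_mul_uSer]
    rw [show (onePlusPiPow p c - 1) * gammaQ p c q = gammaQ p c (X * q) from this.symm]
    rw [hgp, hgam, show psSubstHom hh0 (gp p ℚ_[p]) = (onePlusPiPow p c) ^ p - 1 from gamma_gp p c]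
  exact mul_left_cancel₀ X_ne_zero (e1.trans e2.symm)

/-- The iterated identity. -/
theorem iter_identity (q : PowerSeries ℚ_[p]) (hq : X * q = (1 + X) ^ p - 1) (c : ℤ_[p]) (n : ℕ) :
    (phiA p ℚ_[p])^[n] q * (phiA p ℚ_[p])^[n + 1] (uSer p c)
      = (phiA p ℚ_[p])^[n] (uSer p c) * gammaQ p c ((phiA p ℚ_[p])^[n] q) := by
  have hg0 := constantCoeff_gp p ℚ_[p]
  have hphi : ∀ f, phiA p ℚ_[p] f = psSubstHom hg0 f := fun _ => rfl
  induction n with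
  | zero => simpa using qu_identity p q hq c
  | succ n ih =>
    have this1 : phiA p ℚ_[p] ((phiA p ℚ_[p])^[n] q)
          * phiA p ℚ_[p] ((phiA p ℚ_[p])^[n+1] (uSer p c))
        = phiA p ℚ_[p] ((phiA p ℚ_[p])^[n] (uSer p c))
          * phiA p ℚ_[p] (gammaQ p c ((phiA p ℚ_[p])^[n] q)) := by
      have h2 := congrArg (psSubstHom hg0) ih
      rw [map_mul, map_mul] at h2
      exact h2
    rw [Function.iterate_succ_apply' (phiA p ℚ_[p]) n q,
      Function.iterate_succ_apply' (phiA p ℚ_[p]) (n+1) (uSer p c),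
      Function.iterate_succ_apply' (phiA p ℚ_[p]) n (uSer p c)]
    rw [phi_gamma_comm p c ((phiA p ℚ_[p])^[n] q),
      Function.iterate_succ_apply' (phiA p ℚ_[p]) n (uSer p c)] at this1
    exact this1

theorem constantCoeff_phi_iter (f : PowerSeries ℚ_[p]) (k : ℕ) :
    constantCoeff (R := ℚ_[p]) ((phiA p ℚ_[p])^[k] f) = constantCoeff (R := ℚ_[p]) f := by
  induction k with
  | zero => rfl
  | succ k ih =>
    rw [Function.iterate_succ_apply', phiA_eq, psSubst_constantCoeff, ih]

theorem intSeries_phi_iter {f : PowerSeries ℚ_[p]} (hf : IntSeries p f) (k : ℕ) :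
    IntSeries p ((phiA p ℚ_[p])^[k] f) := by
  induction k with
  | zero => simpa using hf
  | succ k ih =>
    rw [Function.iterate_succ_apply', phiA_eq]
    exact intSeries_psSubst p (intSeries_gp p) ih

theorem constantCoeff_gamma (c : ℤ_[p]) (f : PowerSeries ℚ_[p]) :
    constantCoeff (R := ℚ_[p]) (gammaQ p c f) = constantCoeff (R := ℚ_[p]) f := by
  rw [gammaQ_eq, psSubst_constantCoeff]

end Aux6

namespace Aux7
open Aux Aux2 Aux3 Aux4 Aux5 Aux6

variable (p : ℕ) [Fact p.Prime]

theorem tendsto_coeff_gamma (c : ℤ_[p]) {F : ℕ → PowerSeries ℚ_[p]} {L : PowerSeries ℚ_[p]}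
    (hF : CoeffTendsto p F L) :
    CoeffTendsto p (fun N => gammaQ p c (F N)) (gammaQ p c L) := by
  intro d
  simp only [gammaQ_eq, psSubst, coeff_mk]
  exact tendsto_finset_sum _ fun i _ => (hF i).mul_const _

theorem tendsto_coeff_mul {F G : ℕ → PowerSeries ℚ_[p]} {L M : PowerSeries ℚ_[p]}
    (hF : CoeffTendsto p F L) (hG : CoeffTendsto p G M) :
    CoeffTendsto p (fun N => F N * G N) (L * M) := by
  intro d
  simp only [coeff_mul]
  exact tendsto_finset_sum _ fun ab _ => (hF ab.1).mul (hG ab.2)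

theorem tendsto_coeff_inv {F : ℕ → PowerSeries ℚ_[p]} {L : PowerSeries ℚ_[p]}
    (hF : CoeffTendsto p F L) (hL : constantCoeff (R := ℚ_[p]) L ≠ 0) :
    CoeffTendsto p (fun N => (F N)⁻¹) L⁻¹ := by
  intro d
  have hL0 : coeff (R := ℚ_[p]) 0 L ≠ 0 := by rwa [coeff_zero_eq_constantCoeff_apply]
  induction d using Nat.strong_induction_on with
  | _ d ih =>
    rcases Nat.eq_zero_or_pos d with rfl | hd
    · have key : ∀ f : PowerSeries ℚ_[p], coeff (R := ℚ_[p]) 0 f⁻¹ = (coeff (R := ℚ_[p]) 0 f)⁻¹ := fun f => by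
        rw [coeff_zero_eq_constantCoeff_apply, coeff_zero_eq_constantCoeff_apply,
          PowerSeries.constantCoeff_inv]
      simp only [key]
      exact (hF 0).inv₀ hL0
    · have key : ∀ f : PowerSeries ℚ_[p], coeff (R := ℚ_[p]) d f⁻¹
          = -(coeff (R := ℚ_[p]) 0 f)⁻¹ * ∑ x ∈ antidiagonal d,
              if x.2 < d then coeff (R := ℚ_[p]) x.1 f * coeff (R := ℚ_[p]) x.2 f⁻¹ else 0 := fun f => by
        rw [PowerSeries.coeff_inv d, if_neg (by omega), coeff_zero_eq_constantCoeff_apply]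
      simp only [key]
      refine Filter.Tendsto.mul (((hF 0).inv₀ hL0).neg) ?_
      refine tendsto_finset_sum _ fun ab _ => ?_
      by_cases hab : ab.2 < d
      · simp only [if_pos hab]
        exact (hF ab.1).mul (ih ab.2 hab)
      · simp only [if_neg hab]
        exact tendsto_const_nhds

end Aux7

namespace Aux8
open Aux Aux2 Aux3 Aux4 Aux5 Aux6 Aux7

variable (p : ℕ) [Fact p.Prime]

theorem main_half (q : PowerSeries ℚ_[p]) (hq : X * q = (1 + X) ^ p - 1)
    (c : ℤ_[p]ˣ) (m : ℕ → ℕ) (L : PowerSeries ℚ_[p])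
    (hL : CoeffTendsto p (fun N => ∏ n ∈ Finset.range (N + 1),
      (p : ℚ_[p])⁻¹ • (phiA p ℚ_[p])^[m n] q) L) :
    IntSeries p (L * (gammaQ p (c : ℤ_[p]) L)⁻¹) ∧
      constantCoeff (R := ℚ_[p]) (L * (gammaQ p (c : ℤ_[p]) L)⁻¹) = 1 := by
  have hp : p.Prime := Fact.out
  have hp0 : (p : ℚ_[p]) ≠ 0 := Nat.cast_ne_zero.mpr hp.ne_zero
  have hq0 : constantCoeff (R := ℚ_[p]) q = (p : ℚ_[p]) := by
    have h := congrArg (coeff (R := ℚ_[p]) 1) hq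
    rw [coeff_succ_X_mul 0, coeff_zero_eq_constantCoeff_apply, map_sub,
      coeff_one_add_X_pow, coeff_one, if_neg one_ne_zero, sub_zero,
      Nat.choose_one_right] at h
    exact h
  have hcnorm : ‖((c : ℤ_[p]) : ℚ_[p])‖ = 1 := by
    rw [← PadicInt.norm_def]
    exact PadicInt.norm_units c
  have hcne : ((c : ℤ_[p]) : ℚ_[p]) ≠ 0 := by
    intro h
    rw [h, norm_zero] at hcnorm
    norm_num at hcnorm
  set P : ℕ → PowerSeries ℚ_[p] := fun N => ∏ n ∈ Finset.range (N + 1),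
    C (R := ℚ_[p]) (p : ℚ_[p])⁻¹ * (phiA p ℚ_[p])^[m n] q with hPdef
  set S : ℕ → PowerSeries ℚ_[p] := fun N => ∏ n ∈ Finset.range (N + 1),
    ((phiA p ℚ_[p])^[m n] (uSer p (c : ℤ_[p])) * ((phiA p ℚ_[p])^[m n + 1] (uSer p (c : ℤ_[p])))⁻¹) with hSdef
  have hh0 := constantCoeff_h p (c : ℤ_[p])
  have hgam : ∀ f, gammaQ p (c : ℤ_[p]) f = psSubstHom hh0 f := fun _ => rfl
  have hw0 : ∀ k : ℕ, constantCoeff (R := ℚ_[p]) ((phiA p ℚ_[p])^[k] (uSer p (c : ℤ_[p])))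
      = ((c : ℤ_[p]) : ℚ_[p]) := by
    intro k
    rw [constantCoeff_phi_iter, constantCoeff_uSer]
  have hq0' : ∀ k : ℕ, constantCoeff (R := ℚ_[p]) ((phiA p ℚ_[p])^[k] q) = (p : ℚ_[p]) :=
    fun k => by rw [constantCoeff_phi_iter, hq0]
  have hterm : ∀ n : ℕ, C (R := ℚ_[p]) (p : ℚ_[p])⁻¹ * (phiA p ℚ_[p])^[m n] q
      = ((phiA p ℚ_[p])^[m n] (uSer p (c : ℤ_[p])) * ((phiA p ℚ_[p])^[m n + 1] (uSer p (c : ℤ_[p])))⁻¹)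
        * (C (R := ℚ_[p]) (p : ℚ_[p])⁻¹ * gammaQ p (c : ℤ_[p]) ((phiA p ℚ_[p])^[m n] q)) := by
    intro n
    have hid := iter_identity p q hq (c : ℤ_[p]) (m n)
    have hwinv : (phiA p ℚ_[p])^[m n + 1] (uSer p (c : ℤ_[p])) * ((phiA p ℚ_[p])^[m n + 1] (uSer p (c : ℤ_[p])))⁻¹ = 1 :=
      PowerSeries.mul_inv_cancel _ (by rw [hw0]; exact hcne)
    have hfrac : (phiA p ℚ_[p])^[m n] q
        = ((phiA p ℚ_[p])^[m n] (uSer p (c : ℤ_[p])) * gammaQ p (c : ℤ_[p]) ((phiA p ℚ_[p])^[m n] q))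
          * ((phiA p ℚ_[p])^[m n + 1] (uSer p (c : ℤ_[p])))⁻¹ := by
      rw [← hid, mul_assoc, hwinv, mul_one]
    conv_lhs => rw [hfrac]
    ring
  have hγP : ∀ N, gammaQ p (c : ℤ_[p]) (P N) = ∏ n ∈ Finset.range (N + 1),
      (C (R := ℚ_[p]) (p : ℚ_[p])⁻¹ * gammaQ p (c : ℤ_[p]) ((phiA p ℚ_[p])^[m n] q)) := by
    intro N
    rw [hgam, hPdef]
    rw [map_prod]
    refine Finset.prod_congr rfl fun n _ => ?_
    rw [map_mul, show psSubstHom hh0 (C (R := ℚ_[p]) (p : ℚ_[p])⁻¹) = C (R := ℚ_[p]) (p : ℚ_[p])⁻¹ from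
      psSubst_C hh0 _]
    rfl
  have hPS : ∀ N, P N = S N * gammaQ p (c : ℤ_[p]) (P N) := by
    intro N
    rw [hγP, hSdef, ← Finset.prod_mul_distrib]
    exact Finset.prod_congr rfl fun n _ => hterm n
  have hP0 : ∀ N, constantCoeff (R := ℚ_[p]) (P N) = 1 := by
    intro N
    rw [hPdef]
    rw [map_prod]
    rw [Finset.prod_congr rfl fun n _ => show constantCoeff (R := ℚ_[p])
        (C (R := ℚ_[p]) (p : ℚ_[p])⁻¹ * (phiA p ℚ_[p])^[m n] q) = 1 from by
      rw [map_mul, constantCoeff_C, hq0', inv_mul_cancel₀ hp0]]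
    exact Finset.prod_const_one
  have hL' : CoeffTendsto p P L := by
    have hPeq : (fun N => ∏ n ∈ Finset.range (N + 1),
        (p : ℚ_[p])⁻¹ • (phiA p ℚ_[p])^[m n] q) = P := by
      funext N
      exact Finset.prod_congr rfl fun n _ => smul_eq_C_mul _ _
    rwa [hPeq] at hL
  have hL0 : constantCoeff (R := ℚ_[p]) L = 1 := by
    rw [← coeff_zero_eq_constantCoeff_apply]
    have h2 : Tendsto (fun N => coeff (R := ℚ_[p]) 0 (P N)) atTop (nhds 1) := by
      refine Tendsto.congr (f₁ := fun _ => (1 : ℚ_[p])) ?_ tendsto_const_nhds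
      intro N
      rw [coeff_zero_eq_constantCoeff_apply, hP0 N]
    exact tendsto_nhds_unique (hL' 0) h2
  have hγL0 : constantCoeff (R := ℚ_[p]) (gammaQ p (c : ℤ_[p]) L) ≠ 0 := by
    rw [constantCoeff_gamma, hL0]
    exact one_ne_zero
  have htend : CoeffTendsto p (fun N => P N * (gammaQ p (c : ℤ_[p]) (P N))⁻¹)
      (L * (gammaQ p (c : ℤ_[p]) L)⁻¹) :=
    tendsto_coeff_mul p hL' (tendsto_coeff_inv p (tendsto_coeff_gamma p _ hL') hγL0)
  have hPS2 : ∀ N, P N * (gammaQ p (c : ℤ_[p]) (P N))⁻¹ = S N := by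
    intro N
    have hγP0 : constantCoeff (R := ℚ_[p]) (gammaQ p (c : ℤ_[p]) (P N)) ≠ 0 := by
      rw [constantCoeff_gamma, hP0 N]
      exact one_ne_zero
    calc P N * (gammaQ p (c : ℤ_[p]) (P N))⁻¹
        = (S N * gammaQ p (c : ℤ_[p]) (P N)) * (gammaQ p (c : ℤ_[p]) (P N))⁻¹ := by
          rw [← hPS N]
      _ = S N * (gammaQ p (c : ℤ_[p]) (P N) * (gammaQ p (c : ℤ_[p]) (P N))⁻¹) := by ring
      _ = S N := by rw [PowerSeries.mul_inv_cancel _ hγP0, mul_one]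
  have htendS : CoeffTendsto p S (L * (gammaQ p (c : ℤ_[p]) L)⁻¹) := fun d =>
    (htend d).congr fun N => congrArg (coeff (R := ℚ_[p]) d) (hPS2 N)
  have hSint : ∀ N, IntSeries p (S N) := by
    intro N
    refine intSeries_prod p _ _ fun n _ => intSeries_mul p ?_ ?_
    · exact intSeries_phi_iter p (intSeries_uSer p _) _
    · exact intSeries_inv p (intSeries_phi_iter p (intSeries_uSer p _) _)
        (by rw [hw0]; exact hcnorm)
  have hS0 : ∀ N, constantCoeff (R := ℚ_[p]) (S N) = 1 := by
    intro N
    rw [hSdef]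
    rw [map_prod]
    rw [Finset.prod_congr rfl fun n _ => show constantCoeff (R := ℚ_[p])
        ((phiA p ℚ_[p])^[m n] (uSer p (c : ℤ_[p])) * (((phiA p ℚ_[p])^[m n + 1] (uSer p (c : ℤ_[p])))⁻¹)) = 1 from by
      rw [map_mul, PowerSeries.constantCoeff_inv, hw0, hw0, mul_inv_cancel₀ hcne]]
    exact Finset.prod_const_one
  constructor
  · intro d
    refine le_of_tendsto (htendS d).norm (Filter.Eventually.of_forall fun N => ?_)
    exact hSint N d
  · rw [← coeff_zero_eq_constantCoeff_apply]
    have h2 : Tendsto (fun N => coeff (R := ℚ_[p]) 0 (S N)) atTop (nhds 1) := by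
      refine Tendsto.congr (f₁ := fun _ => (1 : ℚ_[p])) ?_ tendsto_const_nhds
      intro N
      rw [coeff_zero_eq_constantCoeff_apply, hS0 N]
    exact tendsto_nhds_unique (htendS 0) h2

end Aux8

end AuxProofs

theorem statement4 (p : ℕ) [Fact p.Prime]
    (q : PowerSeries ℚ_[p]) (hq : PowerSeries.X * q = (1 + PowerSeries.X) ^ p - 1)
    (lamPlus lamMinus : PowerSeries ℚ_[p])
    (hplus : CoeffTendsto p (partialPlus p q) lamPlus)
    (hminus : CoeffTendsto p (partialMinus p q) lamMinus)
    (c : ℤ_[p]ˣ) :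
    (IntSeries p (lamPlus * (gammaQ p c lamPlus)⁻¹) ∧
      PowerSeries.constantCoeff (R := ℚ_[p]) (lamPlus * (gammaQ p c lamPlus)⁻¹) = 1) ∧
    (IntSeries p (lamMinus * (gammaQ p c lamMinus)⁻¹) ∧
      PowerSeries.constantCoeff (R := ℚ_[p]) (lamMinus * (gammaQ p c lamMinus)⁻¹) = 1) :=
  ⟨Aux8.main_half p q hq c (fun n => 2 * n + 1) lamPlus hplus,
   Aux8.main_half p q hq c (fun n => 2 * n) lamMinus hminus⟩
end

section
/- For every n ≥ 1, both q_n/p and p·q_n^{−1} belong to R; that is, writing q_n/p = ∑_{i≥0} a_i π^i and p·q_n^{−1} = ∑_{i≥0} b_i π^i (q_n is a unit of Q_p[[π]] since its constant term is p ≠ 0), one has v_p(a_i) + i/(p−1) ≥ 0 and v_p(b_i) + i/(p−1) ≥ 0 for all i ≥ 0. -/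
open PowerSeries Filter Finset

noncomputable section Aux6
variable {p : ℕ} [Fact p.Prime]

private lemma aux6_sum_norm {ι : Type*} (s : Finset ι) (f : ι → ℚ_[p]) {C : ℝ} (hC : 0 ≤ C)
    (h : ∀ i ∈ s, ‖f i‖ ≤ C) : ‖∑ i ∈ s, f i‖ ≤ C :=
  IsUltrametricDist.norm_sum_le_of_forall_le_of_nonneg hC h

private def aux6_Int (f : PowerSeries ℚ_[p]) : Prop := ∀ i, ‖coeff (R := ℚ_[p]) i f‖ ≤ 1

private lemma aux6_int_mul {f g : PowerSeries ℚ_[p]} (hf : aux6_Int f) (hg : aux6_Int g) :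
    aux6_Int (f * g) := by
  intro n
  rw [coeff_mul]
  refine aux6_sum_norm _ _ zero_le_one fun x _ => ?_
  rw [norm_mul]
  exact mul_le_one₀ (hf _) (norm_nonneg _) (hg _)

private lemma aux6_int_pow {f : PowerSeries ℚ_[p]} (hf : aux6_Int f) (i : ℕ) :
    aux6_Int (f ^ i) := by
  induction i with
  | zero => intro n; rw [pow_zero, coeff_one]; split_ifs <;> simp
  | succ i ih => rw [pow_succ]; exact aux6_int_mul ih hf

private lemma aux6_coeff_oneX (j : ℕ) :
    coeff (R := ℚ_[p]) j ((1 + X) ^ p) = (p.choose j : ℚ_[p]) := by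
  rw [add_comm, add_pow]
  simp only [one_pow, mul_one, map_sum]
  have : ∀ k ∈ range (p + 1), coeff (R := ℚ_[p]) j ((X : ℚ_[p]⟦X⟧) ^ k * (p.choose k : ℚ_[p]⟦X⟧))
      = if k = j then (p.choose j : ℚ_[p]) else 0 := by
    intro k _
    rw [mul_comm, ← map_natCast (C (R := ℚ_[p])) (p.choose k), coeff_C_mul, coeff_X_pow]
    split_ifs with h1 h2 h2
    · rw [mul_one, h2]
    · exact absurd h1.symm h2
    · exact absurd h2.symm h1
    · rw [mul_zero]
  rw [Finset.sum_congr rfl this, Finset.sum_ite_eq' (range (p + 1)) j]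
  split_ifs with h
  · rfl
  · rw [mem_range, not_lt] at h
    rw [eq_comm, Nat.cast_eq_zero, Nat.choose_eq_zero_iff]
    omega

variable {q : PowerSeries ℚ_[p]} (hq : X * q = (1 + X) ^ p - 1)

include hq in
private lemma aux6_coeff_q (i : ℕ) : coeff (R := ℚ_[p]) i q = (p.choose (i + 1) : ℚ_[p]) := by
  have := congrArg (coeff (R := ℚ_[p]) (i + 1)) hq
  rwa [coeff_succ_X_mul, map_sub, aux6_coeff_oneX, coeff_one, if_neg (Nat.succ_ne_zero i),
    sub_zero] at this

include hq in
private lemma aux6_int_q : aux6_Int q := by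
  intro i
  rw [aux6_coeff_q hq]
  exact (by exact_mod_cast Padic.norm_int_le_one _)

include hq in
private lemma aux6_small_q {i : ℕ} (hi : i + 1 < p) : ‖coeff (R := ℚ_[p]) i q‖ ≤ (p : ℝ)⁻¹ := by
  have hdvd : p ∣ p.choose (i + 1) :=
    (Fact.out : p.Prime).dvd_choose_self (Nat.succ_ne_zero i) hi
  obtain ⟨c, hc⟩ := hdvd
  rw [aux6_coeff_q hq, hc, Nat.cast_mul, norm_mul, Padic.norm_p]
  calc (p : ℝ)⁻¹ * ‖(c : ℚ_[p])‖ ≤ (p : ℝ)⁻¹ * 1 := by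
        exact mul_le_mul_of_nonneg_left ((by exact_mod_cast Padic.norm_int_le_one _)) (by positivity)
    _ = (p : ℝ)⁻¹ := mul_one _

include hq in
private lemma aux6_coeff_phiA (f : PowerSeries ℚ_[p]) (j : ℕ) :
    coeff (R := ℚ_[p]) j (phiA p ℚ_[p] f) =
      ∑ i ∈ range (j + 1), coeff (R := ℚ_[p]) i f * coeff (R := ℚ_[p]) j ((X * q) ^ i) := by
  rw [phiA, psSubst, coeff_mk, hq]

private lemma aux6_coeff_Xq_pow (i j : ℕ) :
    coeff (R := ℚ_[p]) j ((X * q) ^ i) = if i ≤ j then coeff (R := ℚ_[p]) (j - i) (q ^ i) else 0 := by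
  rw [mul_pow, coeff_X_pow_mul']

include hq in
private lemma aux6_smallpow : ∀ i d : ℕ, d < i * (p - 1) →
    ‖coeff (R := ℚ_[p]) d (q ^ i)‖ ≤ (p : ℝ)⁻¹ := by
  intro i
  induction i with
  | zero => intro d hd; omega
  | succ i ih =>
    intro d hd
    rw [pow_succ, mul_comm, coeff_mul]
    refine aux6_sum_norm _ _ (by positivity) fun x hx => ?_
    rw [Finset.HasAntidiagonal.mem_antidiagonal] at hx
    rw [norm_mul]
    rcases lt_or_ge (x.1 + 1) p with h | h
    · calc ‖coeff (R := ℚ_[p]) x.1 q‖ * ‖coeff (R := ℚ_[p]) x.2 (q ^ i)‖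
          ≤ (p : ℝ)⁻¹ * 1 := mul_le_mul (aux6_small_q hq h) (aux6_int_pow (aux6_int_q hq) i _)
            (norm_nonneg _) (by positivity)
        _ = (p : ℝ)⁻¹ := mul_one _
    · have h2 : x.2 < i * (p - 1) := by
        have : (i + 1) * (p - 1) = i * (p - 1) + (p - 1) := by ring
        omega
      calc ‖coeff (R := ℚ_[p]) x.1 q‖ * ‖coeff (R := ℚ_[p]) x.2 (q ^ i)‖
          ≤ 1 * (p : ℝ)⁻¹ := mul_le_mul (aux6_int_q hq _) (ih _ h2) (norm_nonneg _) zero_le_one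
        _ = (p : ℝ)⁻¹ := one_mul _

include hq in
private lemma aux6_key (m : ℕ) :
    aux6_Int ((phiA p ℚ_[p])^[m] q) ∧ coeff (R := ℚ_[p]) 0 ((phiA p ℚ_[p])^[m] q) = p ∧
      ∀ j, j + 1 < p → ‖coeff (R := ℚ_[p]) j ((phiA p ℚ_[p])^[m] q)‖ ≤ (p : ℝ)⁻¹ := by
  induction m with
  | zero =>
    refine ⟨by rw [Function.iterate_zero_apply]; exact aux6_int_q hq, ?_, fun j hj => by rw [Function.iterate_zero_apply]; exact aux6_small_q hq hj⟩
    rw [Function.iterate_zero_apply, aux6_coeff_q hq, Nat.choose_one_right]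
  | succ m ih =>
    obtain ⟨hint, hconst, hsmall⟩ := ih
    set Q := (phiA p ℚ_[p])^[m] q with hQ
    rw [Function.iterate_succ_apply']
    have hintq := aux6_int_q hq
    refine ⟨?_, ?_, ?_⟩
    · intro j
      rw [aux6_coeff_phiA hq]
      refine aux6_sum_norm _ _ zero_le_one fun i _ => ?_
      rw [norm_mul]
      exact mul_le_one₀ (hint _) (norm_nonneg _)
        (aux6_int_pow (aux6_int_mul (fun n => by
          rw [coeff_X]; split_ifs <;> simp) hintq) i _)
    · rw [aux6_coeff_phiA hq, Finset.sum_range_one, pow_zero, coeff_one, if_pos rfl, mul_one,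
        hconst]
    · intro j hj
      rw [aux6_coeff_phiA hq]
      refine aux6_sum_norm _ _ (by positivity) fun i hi => ?_
      rw [norm_mul]
      rcases Nat.eq_zero_or_pos i with rfl | hipos
      · rw [pow_zero, coeff_one]
        have : ‖coeff (R := ℚ_[p]) 0 Q‖ = (p : ℝ)⁻¹ := by rw [hconst, Padic.norm_p]
        split_ifs
        · rw [norm_one, mul_one, this]
        · rw [norm_zero, mul_zero]; positivity
      · rw [aux6_coeff_Xq_pow]
        split_ifs with hile
        · have hp2 : 2 ≤ p := (Fact.out : p.Prime).two_le
          have h1 : p - 1 ≤ i * (p - 1) := Nat.le_mul_of_pos_left _ hipos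
          have h2 : j - i < i * (p - 1) := by omega
          calc ‖coeff (R := ℚ_[p]) i Q‖ * ‖coeff (R := ℚ_[p]) (j - i) (q ^ i)‖
              ≤ 1 * (p : ℝ)⁻¹ := mul_le_mul (hint _) (aux6_smallpow hq i _ h2)
                (norm_nonneg _) zero_le_one
            _ = (p : ℝ)⁻¹ := one_mul _
        · rw [norm_zero, mul_zero]; positivity


private lemma aux6_div_add_div (a b d : ℕ) (hd : 0 < d) : a / d + b / d ≤ (a + b) / d := by
  rw [Nat.le_div_iff_mul_le hd, add_mul]
  exact Nat.add_le_add (Nat.div_mul_le_self a d) (Nat.div_mul_le_self b d)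

private lemma aux6_memR_of {f : PowerSeries ℚ_[p]}
    (h : ∀ i : ℕ, ‖coeff (R := ℚ_[p]) i f‖ ≤ (p : ℝ) ^ (i / (p - 1))) : memR p f := by
  intro i
  refine (h i).trans ?_
  have hp2 : 2 ≤ p := (Fact.out : p.Prime).two_le
  have hp1 : (1 : ℝ) ≤ p := by exact_mod_cast hp2.trans' one_le_two
  rw [← Real.rpow_natCast]
  apply Real.rpow_le_rpow_of_exponent_le hp1
  have h1 : (↑(i / (p - 1)) : ℝ) * ((p : ℝ) - 1) ≤ (i : ℝ) := by
    have := Nat.div_mul_le_self i (p - 1)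
    calc (↑(i / (p - 1)) : ℝ) * ((p : ℝ) - 1) = ((i / (p - 1)) * (p - 1) : ℕ) := by
          push_cast [Nat.cast_sub (by omega : 1 ≤ p)]; ring
      _ ≤ (i : ℝ) := by exact_mod_cast this
  rw [le_div_iff₀ (by norm_num; exact_mod_cast hp2 : (0:ℝ) < (p:ℝ) - 1)]
  exact h1

include hq in
private lemma aux6_u_bound (m : ℕ) (i : ℕ) :
    ‖coeff (R := ℚ_[p]) i ((p : ℚ_[p])⁻¹ • (phiA p ℚ_[p])^[m] q)‖ ≤ (p : ℝ) ^ (i / (p - 1)) := by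
  obtain ⟨hint, hconst, hsmall⟩ := aux6_key hq m
  have hp2 : 2 ≤ p := (Fact.out : p.Prime).two_le
  have hppos : (0 : ℝ) < p := by exact_mod_cast (by omega : 0 < p)
  rw [map_smul, smul_eq_mul, norm_mul, norm_inv, Padic.norm_p, inv_inv]
  rcases lt_or_ge (i + 1) p with h | h
  · calc (p : ℝ) * ‖coeff (R := ℚ_[p]) i ((phiA p ℚ_[p])^[m] q)‖ ≤ (p : ℝ) * (p : ℝ)⁻¹ :=
        mul_le_mul_of_nonneg_left (hsmall i h) hppos.le
      _ = 1 := mul_inv_cancel₀ hppos.ne'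
      _ ≤ (p : ℝ) ^ (i / (p - 1)) := one_le_pow₀ (by exact_mod_cast hp2.trans' one_le_two)
  · have h1 : 1 ≤ i / (p - 1) := by
      rw [Nat.le_div_iff_mul_le (by omega)]; omega
    calc (p : ℝ) * ‖coeff (R := ℚ_[p]) i ((phiA p ℚ_[p])^[m] q)‖ ≤ (p : ℝ) * 1 :=
        mul_le_mul_of_nonneg_left (hint i) hppos.le
      _ = (p : ℝ) ^ 1 := by rw [mul_one, pow_one]
      _ ≤ (p : ℝ) ^ (i / (p - 1)) :=
        pow_le_pow_right₀ (by exact_mod_cast hp2.trans' one_le_two) h1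

include hq in
private lemma aux6_inv_bound (m : ℕ) (j : ℕ) :
    ‖coeff (R := ℚ_[p]) j ((p : ℚ_[p])⁻¹ • (phiA p ℚ_[p])^[m] q)⁻¹‖ ≤ (p : ℝ) ^ (j / (p - 1)) := by
  set u := (p : ℚ_[p])⁻¹ • (phiA p ℚ_[p])^[m] q with hu
  have hp2 : 2 ≤ p := (Fact.out : p.Prime).two_le
  have hppos : (0 : ℝ) < p := by exact_mod_cast (by omega : 0 < p)
  have hp0 : (p : ℚ_[p]) ≠ 0 := Nat.cast_ne_zero.mpr (by omega)
  have hc : constantCoeff (R := ℚ_[p]) u = 1 := by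
    rw [hu, smul_eq_C_mul, map_mul, constantCoeff_C, ← coeff_zero_eq_constantCoeff,
      (aux6_key hq m).2.1, inv_mul_cancel₀ hp0]
  induction j using Nat.strong_induction_on with
  | _ j ih =>
    rw [coeff_inv]
    rcases Nat.eq_zero_or_pos j with rfl | hjpos
    · rw [if_pos rfl, hc, inv_one, norm_one, Nat.zero_div, pow_zero]
    · rw [if_neg (by omega), hc, inv_one, neg_one_mul, norm_neg]
      refine aux6_sum_norm _ _ (by positivity) fun x hx => ?_
      rw [Finset.HasAntidiagonal.mem_antidiagonal] at hx
      split_ifs with hx2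
      · rw [norm_mul]
        calc ‖coeff (R := ℚ_[p]) x.1 u‖ * ‖coeff (R := ℚ_[p]) x.2 u⁻¹‖
            ≤ (p : ℝ) ^ (x.1 / (p - 1)) * (p : ℝ) ^ (x.2 / (p - 1)) :=
              mul_le_mul (aux6_u_bound hq m x.1) (ih x.2 hx2) (norm_nonneg _) (by positivity)
          _ = (p : ℝ) ^ (x.1 / (p - 1) + x.2 / (p - 1)) := (pow_add _ _ _).symm
          _ ≤ (p : ℝ) ^ (j / (p - 1)) := by
              apply pow_le_pow_right₀ (by exact_mod_cast hp2.trans' one_le_two)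
              rw [← hx]
              exact aux6_div_add_div _ _ _ (by omega)
      · rw [norm_zero]; positivity

end Aux6

theorem statement6 (p : ℕ) [Fact p.Prime]
    (q : PowerSeries ℚ_[p]) (hq : PowerSeries.X * q = (1 + PowerSeries.X) ^ p - 1)
    (n : ℕ) (hn : 1 ≤ n) :
    memR p ((p : ℚ_[p])⁻¹ • (phiA p ℚ_[p])^[n - 1] q) ∧
      memR p ((p : PowerSeries ℚ_[p]) * ((phiA p ℚ_[p])^[n - 1] q)⁻¹) := by
  set m := n - 1
  set Q := (phiA p ℚ_[p])^[m] q with hQ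
  have hp2 : 2 ≤ p := (Fact.out : p.Prime).two_le
  have hp0 : (p : ℚ_[p]) ≠ 0 := Nat.cast_ne_zero.mpr (by omega)
  set u := (p : ℚ_[p])⁻¹ • Q with hu
  have hcQ : constantCoeff (R := ℚ_[p]) Q ≠ 0 := by
    rw [← coeff_zero_eq_constantCoeff, (aux6_key hq m).2.1]; exact hp0
  have hcu : constantCoeff (R := ℚ_[p]) u ≠ 0 := by
    rw [hu, smul_eq_C_mul, map_mul, constantCoeff_C, ← coeff_zero_eq_constantCoeff,
      (aux6_key hq m).2.1, inv_mul_cancel₀ hp0]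
    exact one_ne_zero
  have heq : (p : PowerSeries ℚ_[p]) * Q⁻¹ = u⁻¹ := by
    have h1 : u * ((p : PowerSeries ℚ_[p]) * Q⁻¹) = 1 := by
      rw [hu, smul_eq_C_mul, ← map_natCast (C (R := ℚ_[p])) p]
      rw [show C (R := ℚ_[p]) (p : ℚ_[p])⁻¹ * Q * (C (R := ℚ_[p]) (p : ℚ_[p]) * Q⁻¹)
          = C (R := ℚ_[p]) (p : ℚ_[p])⁻¹ * C (R := ℚ_[p]) (p : ℚ_[p]) * (Q⁻¹ * Q) by ring,
        ← map_mul, inv_mul_cancel₀ hp0, map_one, PowerSeries.inv_mul_cancel Q hcQ, one_mul]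
    calc (p : PowerSeries ℚ_[p]) * Q⁻¹
        = u⁻¹ * (u * ((p : PowerSeries ℚ_[p]) * Q⁻¹)) := by
          rw [← mul_assoc, PowerSeries.inv_mul_cancel u hcu, one_mul]
      _ = u⁻¹ := by rw [h1, mul_one]
  exact ⟨aux6_memR_of (aux6_u_bound hq m), heq ▸ aux6_memR_of (aux6_inv_bound hq m)⟩
end

section
/- Let k ≥ 2 be an integer and set m = ⌊(k−2)/(p−1)⌋. Writing p^m·λ_−^{k−1}·λ_+^{−(k−1)} = ∑_{i≥0} z_i π^i in Q_p[[π]], one has z_i ∈ Z_p for all 0 ≤ i ≤ k−2; consequently the truncation z = z_0 + z_1 π + ⋯ + z_{k−2} π^{k−2} lies in Z_p[[π]] (it is a polynomial over Z_p of degree at most k−2). -/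
open PowerSeries Filter Finset

section AuxStatement7

open PowerSeries Filter Finset

variable {p : ℕ} [Fact p.Prime]

private lemma aux_hp1 : (1:ℝ) ≤ (p:ℝ) := by
  exact_mod_cast (Fact.out : p.Prime).one_lt.le

/-- coefficient bounds of shape `‖a_i‖ ≤ p^(e i)`. -/
private def BddBy (e : ℕ → ℕ) (f : PowerSeries ℚ_[p]) : Prop :=
  ∀ i, ‖PowerSeries.coeff (R := ℚ_[p]) i f‖ ≤ (p:ℝ) ^ (e i)

private lemma bddBy_one (e : ℕ → ℕ) : BddBy e (1 : PowerSeries ℚ_[p]) := by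
  intro i
  rw [PowerSeries.coeff_one]
  split <;> simp <;> exact one_le_pow₀ aux_hp1

private lemma bddBy_mul {e : ℕ → ℕ} (hadd : ∀ a b, e a + e b ≤ e (a + b))
    {f g : PowerSeries ℚ_[p]} (hf : BddBy e f) (hg : BddBy e g) : BddBy e (f * g) := by
  intro n
  rw [PowerSeries.coeff_mul]
  apply IsUltrametricDist.norm_sum_le_of_forall_le_of_nonneg (by positivity)
  intro x hx
  rw [Finset.HasAntidiagonal.mem_antidiagonal] at hx
  calc ‖PowerSeries.coeff (R := ℚ_[p]) x.1 f * PowerSeries.coeff (R := ℚ_[p]) x.2 g‖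
      = ‖PowerSeries.coeff (R := ℚ_[p]) x.1 f‖ * ‖PowerSeries.coeff (R := ℚ_[p]) x.2 g‖ := norm_mul _ _
    _ ≤ (p:ℝ) ^ (e x.1) * (p:ℝ) ^ (e x.2) :=
        mul_le_mul (hf x.1) (hg x.2) (norm_nonneg _) (by positivity)
    _ = (p:ℝ) ^ (e x.1 + e x.2) := (pow_add _ _ _).symm
    _ ≤ (p:ℝ) ^ (e n) := by
        apply pow_le_pow_right₀ aux_hp1
        rw [← hx]; exact hadd _ _

private lemma bddBy_pow {e : ℕ → ℕ} (hadd : ∀ a b, e a + e b ≤ e (a + b))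
    {f : PowerSeries ℚ_[p]} (hf : BddBy e f) (n : ℕ) : BddBy e (f ^ n) := by
  induction n with
  | zero => simpa using bddBy_one e
  | succ n ih => rw [pow_succ]; exact bddBy_mul hadd ih hf

private lemma intSeries_iff {f : PowerSeries ℚ_[p]} :
    IntSeries p f ↔ BddBy (fun _ => 0) f := by
  simp [IntSeries, BddBy]

private lemma intSeries_one_add_X : IntSeries p (1 + PowerSeries.X : PowerSeries ℚ_[p]) := by
  intro n
  rw [map_add, PowerSeries.coeff_one, PowerSeries.coeff_X]
  rcases n with _ | _ | n <;> simp

private lemma intSeries_g : IntSeries p ((1 + PowerSeries.X) ^ p - 1 : PowerSeries ℚ_[p]) := by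
  intro n
  rw [map_sub]
  have h1 : IntSeries p ((1 + PowerSeries.X : PowerSeries ℚ_[p]) ^ p) := by
    rw [intSeries_iff] at *
    simpa using bddBy_pow (by simp) (intSeries_iff.mp intSeries_one_add_X) p
  have h2 := (intSeries_iff.mpr (by simpa using bddBy_one (p := p) (fun _ => 0))) n
  calc ‖PowerSeries.coeff (R := ℚ_[p]) n ((1 + PowerSeries.X) ^ p) - PowerSeries.coeff (R := ℚ_[p]) n 1‖
      ≤ max ‖PowerSeries.coeff (R := ℚ_[p]) n ((1 + PowerSeries.X) ^ p)‖
          ‖PowerSeries.coeff (R := ℚ_[p]) n (1 : PowerSeries ℚ_[p])‖ := by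
        have h := IsUltrametricDist.norm_add_le_max
          (PowerSeries.coeff (R := ℚ_[p]) n ((1 + PowerSeries.X) ^ p))
          (-(PowerSeries.coeff (R := ℚ_[p]) n (1 : PowerSeries ℚ_[p])))
        rwa [← sub_eq_add_neg, norm_neg] at h
    _ ≤ 1 := max_le (h1 n) h2

private lemma intSeries_g_pow (i : ℕ) :
    IntSeries p (((1 + PowerSeries.X) ^ p - 1 : PowerSeries ℚ_[p]) ^ i) := by
  rw [intSeries_iff]
  exact bddBy_pow (by simp) (intSeries_iff.mp intSeries_g) i

private lemma coeff_phiA (f : PowerSeries ℚ_[p]) (j : ℕ) :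
    PowerSeries.coeff (R := ℚ_[p]) j (phiA p ℚ_[p] f) =
      ∑ i ∈ Finset.range (j + 1), PowerSeries.coeff (R := ℚ_[p]) i f *
        PowerSeries.coeff (R := ℚ_[p]) j (((1 + PowerSeries.X) ^ p - 1) ^ i) := by
  simp [phiA, psSubst, PowerSeries.coeff_mk]

private lemma bddBy_phiA {e : ℕ → ℕ} (hmono : Monotone e)
    {f : PowerSeries ℚ_[p]} (hf : BddBy e f) : BddBy e (phiA p ℚ_[p] f) := by
  intro j
  rw [coeff_phiA]
  apply IsUltrametricDist.norm_sum_le_of_forall_le_of_nonneg (by positivity)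
  intro i hi
  rw [Finset.mem_range, Nat.lt_succ_iff] at hi
  calc ‖PowerSeries.coeff (R := ℚ_[p]) i f *
        PowerSeries.coeff (R := ℚ_[p]) j (((1 + PowerSeries.X) ^ p - 1) ^ i)‖
      = ‖PowerSeries.coeff (R := ℚ_[p]) i f‖ *
        ‖PowerSeries.coeff (R := ℚ_[p]) j (((1 + PowerSeries.X) ^ p - 1) ^ i)‖ := norm_mul _ _
    _ ≤ (p:ℝ) ^ (e i) * 1 :=
        mul_le_mul (hf i) (intSeries_g_pow i j) (norm_nonneg _) (by positivity)
    _ = (p:ℝ) ^ (e i) := mul_one _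
    _ ≤ (p:ℝ) ^ (e j) := pow_le_pow_right₀ aux_hp1 (hmono hi)

private lemma bddBy_phiA_iter {e : ℕ → ℕ} (hmono : Monotone e)
    {f : PowerSeries ℚ_[p]} (hf : BddBy e f) (n : ℕ) : BddBy e ((phiA p ℚ_[p])^[n] f) := by
  induction n with
  | zero => simpa using hf
  | succ n ih => rw [Function.iterate_succ_apply']; exact bddBy_phiA hmono ih

private lemma phiA_smul (a : ℚ_[p]) (f : PowerSeries ℚ_[p]) :
    phiA p ℚ_[p] (a • f) = a • phiA p ℚ_[p] f := by
  ext j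
  rw [PowerSeries.coeff_smul, coeff_phiA, coeff_phiA, Finset.smul_sum]
  refine Finset.sum_congr rfl fun i _ => ?_
  rw [PowerSeries.coeff_smul]
  simp [smul_eq_mul, mul_assoc]

private lemma phiA_iter_smul (a : ℚ_[p]) (f : PowerSeries ℚ_[p]) (n : ℕ) :
    (phiA p ℚ_[p])^[n] (a • f) = a • (phiA p ℚ_[p])^[n] f := by
  induction n with
  | zero => simp
  | succ n ih => rw [Function.iterate_succ_apply', Function.iterate_succ_apply', ih, phiA_smul]

private lemma constantCoeff_phiA (f : PowerSeries ℚ_[p]) :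
    PowerSeries.constantCoeff (R := ℚ_[p]) (phiA p ℚ_[p] f) = PowerSeries.constantCoeff (R := ℚ_[p]) f := by
  rw [← PowerSeries.coeff_zero_eq_constantCoeff, coeff_phiA]
  simp

private lemma constantCoeff_phiA_iter (f : PowerSeries ℚ_[p]) (n : ℕ) :
    PowerSeries.constantCoeff (R := ℚ_[p]) ((phiA p ℚ_[p])^[n] f) =
      PowerSeries.constantCoeff (R := ℚ_[p]) f := by
  induction n with
  | zero => simp
  | succ n ih => rw [Function.iterate_succ_apply', constantCoeff_phiA, ih]

/-- The exponent function for the ring `R`. -/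
private def eR (p : ℕ) : ℕ → ℕ := fun i => i / (p - 1)

private lemma eR_add (a b : ℕ) : eR p a + eR p b ≤ eR p (a + b) :=
  Nat.add_div_le_add_div a b (p - 1)

private lemma eR_mono : Monotone (eR p) := fun _ _ h => Nat.div_le_div_right h

private lemma bddBy_inv {e : ℕ → ℕ} (he0 : e 0 = 0) (hadd : ∀ a b, e a + e b ≤ e (a + b))
    {f : PowerSeries ℚ_[p]} (hf : BddBy e f)
    (h1 : PowerSeries.constantCoeff (R := ℚ_[p]) f = 1) : BddBy e f⁻¹ := by
  intro n
  induction n using Nat.strong_induction_on with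
  | _ n ih =>
    rw [PowerSeries.coeff_inv]
    split
    · next h =>
      subst h
      simp [h1, he0]
    · next h =>
      rw [h1, inv_one, neg_one_mul, norm_neg]
      apply IsUltrametricDist.norm_sum_le_of_forall_le_of_nonneg (by positivity)
      intro x hx
      rw [Finset.HasAntidiagonal.mem_antidiagonal] at hx
      split
      · next hlt =>
        calc ‖PowerSeries.coeff (R := ℚ_[p]) x.1 f * PowerSeries.coeff (R := ℚ_[p]) x.2 f⁻¹‖
            = ‖PowerSeries.coeff (R := ℚ_[p]) x.1 f‖ * ‖PowerSeries.coeff (R := ℚ_[p]) x.2 f⁻¹‖ :=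
              norm_mul _ _
          _ ≤ (p:ℝ) ^ (e x.1) * (p:ℝ) ^ (e x.2) :=
              mul_le_mul (hf x.1) (ih x.2 hlt) (norm_nonneg _) (by positivity)
          _ = (p:ℝ) ^ (e x.1 + e x.2) := (pow_add _ _ _).symm
          _ ≤ (p:ℝ) ^ (e n) := by
              apply pow_le_pow_right₀ aux_hp1
              rw [← hx]; exact hadd _ _
      · simp only [norm_zero]; positivity

private lemma q_coeff {q : PowerSeries ℚ_[p]}
    (hq : PowerSeries.X * q = (1 + PowerSeries.X) ^ p - 1) (i : ℕ) :
    PowerSeries.coeff (R := ℚ_[p]) i q = (p.choose (i + 1) : ℚ_[p]) := by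
  have h := congrArg (PowerSeries.coeff (R := ℚ_[p]) (i + 1)) hq
  rw [PowerSeries.coeff_succ_X_mul] at h
  rw [h, map_sub]
  have hpoly : ((1 + PowerSeries.X : PowerSeries ℚ_[p])) ^ p =
      (((1 + Polynomial.X : Polynomial ℚ_[p]) ^ p : Polynomial ℚ_[p]) :
        PowerSeries ℚ_[p]) := by
    push_cast
    rfl
  rw [hpoly, Polynomial.coeff_coe, Polynomial.coeff_one_add_X_pow, PowerSeries.coeff_one]
  simp

private lemma bdd_factor {q : PowerSeries ℚ_[p]}
    (hq : PowerSeries.X * q = (1 + PowerSeries.X) ^ p - 1) :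
    BddBy (eR p) ((p : ℚ_[p])⁻¹ • q) := by
  have hp := (Fact.out : p.Prime)
  intro i
  rw [PowerSeries.coeff_smul, q_coeff hq, smul_eq_mul, norm_mul, norm_inv, Padic.norm_p,
    inv_inv]
  by_cases hlt : i < p - 1
  · -- p divides the binomial coefficient
    have hdvd : p ∣ p.choose (i + 1) :=
      hp.dvd_choose_self (Nat.succ_ne_zero i) (by omega)
    obtain ⟨t, ht⟩ := hdvd
    have : ((p.choose (i + 1) : ℚ_[p])) = (p : ℚ_[p]) * (t : ℚ_[p]) := by
      rw [← Nat.cast_mul, ht]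
    rw [this, norm_mul, Padic.norm_p]
    have hnt : ‖(t : ℚ_[p])‖ ≤ 1 := by
      have h := Padic.norm_int_le_one (p := p) (t : ℤ)
      rwa [Int.cast_natCast] at h
    have h0 : eR p i = 0 := Nat.div_eq_of_lt hlt
    rw [h0, pow_zero]
    have hppos : (0:ℝ) < (p:ℝ) := by exact_mod_cast hp.pos
    calc (p:ℝ) * ((p:ℝ)⁻¹ * ‖(t : ℚ_[p])‖) = ‖(t : ℚ_[p])‖ := by
          field_simp
      _ ≤ 1 := hnt
  · have hge : 1 ≤ eR p i := by
      have hp1 : 0 < p - 1 := by have := hp.two_le; omega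
      exact (Nat.one_le_div_iff hp1).mpr (by omega)
    have hn : ‖((p.choose (i + 1) : ℚ_[p]))‖ ≤ 1 := by
      have h := Padic.norm_int_le_one (p := p) ((p.choose (i + 1) : ℕ) : ℤ)
      rwa [Int.cast_natCast] at h
    calc (p:ℝ) * ‖((p.choose (i + 1) : ℚ_[p]))‖ ≤ (p:ℝ) * 1 :=
          mul_le_mul_of_nonneg_left hn (by positivity)
      _ = (p:ℝ) ^ 1 := by ring
      _ ≤ (p:ℝ) ^ (eR p i) := pow_le_pow_right₀ aux_hp1 hge

private lemma bdd_partialPlus {q : PowerSeries ℚ_[p]}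
    (hq : PowerSeries.X * q = (1 + PowerSeries.X) ^ p - 1) (N : ℕ) :
    BddBy (eR p) (partialPlus p q N) := by
  unfold partialPlus
  apply Finset.prod_induction _ (BddBy (eR p)) (fun _ _ => bddBy_mul eR_add) (bddBy_one _)
  intro n _
  rw [← phiA_iter_smul]
  exact bddBy_phiA_iter eR_mono (bdd_factor hq) _

private lemma bdd_partialMinus {q : PowerSeries ℚ_[p]}
    (hq : PowerSeries.X * q = (1 + PowerSeries.X) ^ p - 1) (N : ℕ) :
    BddBy (eR p) (partialMinus p q N) := by
  unfold partialMinus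
  apply Finset.prod_induction _ (BddBy (eR p)) (fun _ _ => bddBy_mul eR_add) (bddBy_one _)
  intro n _
  rw [← phiA_iter_smul]
  exact bddBy_phiA_iter eR_mono (bdd_factor hq) _

private lemma bdd_of_tendsto {F : ℕ → PowerSeries ℚ_[p]} {L : PowerSeries ℚ_[p]}
    (hF : CoeffTendsto p F L) {e : ℕ → ℕ} (h : ∀ N, BddBy e (F N)) : BddBy e L := by
  intro d
  exact le_of_tendsto ((hF d).norm) (Filter.Eventually.of_forall fun N => h N d)

private lemma constantCoeff_partialPlus {q : PowerSeries ℚ_[p]}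
    (hq : PowerSeries.X * q = (1 + PowerSeries.X) ^ p - 1) (N : ℕ) :
    PowerSeries.constantCoeff (R := ℚ_[p]) (partialPlus p q N) = 1 := by
  have hp := (Fact.out : p.Prime)
  have hpne : (p : ℚ_[p]) ≠ 0 := by
    exact_mod_cast hp.ne_zero
  unfold partialPlus
  rw [map_prod]
  apply Finset.prod_eq_one
  intro n _
  rw [PowerSeries.smul_eq_C_mul, map_mul, PowerSeries.constantCoeff_C,
    constantCoeff_phiA_iter]
  have : PowerSeries.constantCoeff (R := ℚ_[p]) q = (p : ℚ_[p]) := by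
    rw [← PowerSeries.coeff_zero_eq_constantCoeff, q_coeff hq]
    simp
  rw [this, inv_mul_cancel₀ hpne]

private lemma constantCoeff_lamPlus {q : PowerSeries ℚ_[p]}
    (hq : PowerSeries.X * q = (1 + PowerSeries.X) ^ p - 1)
    {lamPlus : PowerSeries ℚ_[p]} (hplus : CoeffTendsto p (partialPlus p q) lamPlus) :
    PowerSeries.constantCoeff (R := ℚ_[p]) lamPlus = 1 := by
  have h0 := hplus 0
  simp only [PowerSeries.coeff_zero_eq_constantCoeff] at h0
  have : Filter.Tendsto (fun N => PowerSeries.constantCoeff (R := ℚ_[p]) (partialPlus p q N))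
      Filter.atTop (nhds 1) := by
    simp only [constantCoeff_partialPlus hq]
    exact tendsto_const_nhds
  exact tendsto_nhds_unique h0 this

end AuxStatement7

theorem statement7 (p : ℕ) [Fact p.Prime] (k : ℕ) (hk : 2 ≤ k)
    (q : PowerSeries ℚ_[p]) (hq : PowerSeries.X * q = (1 + PowerSeries.X) ^ p - 1)
    (lamPlus lamMinus : PowerSeries ℚ_[p])
    (hplus : CoeffTendsto p (partialPlus p q) lamPlus)
    (hminus : CoeffTendsto p (partialMinus p q) lamMinus) :
    (∀ i ≤ k - 2, ‖PowerSeries.coeff (R := ℚ_[p]) i (zFull p k lamPlus lamMinus)‖ ≤ 1) ∧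
      IntSeries p (zSeries p k lamPlus lamMinus) := by
  have hp := (Fact.out : p.Prime)
  have hppos : (0:ℝ) < (p:ℝ) := by exact_mod_cast hp.pos
  set m := (k - 2) / (p - 1) with hm
  -- bounds on the limits
  have hminusB : BddBy (eR p) lamMinus := bdd_of_tendsto hminus (bdd_partialMinus hq)
  have hplusB : BddBy (eR p) lamPlus := bdd_of_tendsto hplus (bdd_partialPlus hq)
  have hplusC : PowerSeries.constantCoeff (R := ℚ_[p]) lamPlus = 1 := constantCoeff_lamPlus hq hplus
  have hinvB : BddBy (eR p) lamPlus⁻¹ :=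
    bddBy_inv (by simp [eR]) eR_add hplusB hplusC
  have hw : BddBy (eR p) (lamMinus ^ (k - 1) * lamPlus⁻¹ ^ (k - 1)) :=
    bddBy_mul eR_add (bddBy_pow eR_add hminusB _) (bddBy_pow eR_add hinvB _)
  have key : ∀ i ≤ k - 2, ‖PowerSeries.coeff (R := ℚ_[p]) i (zFull p k lamPlus lamMinus)‖ ≤ 1 := by
    intro i hi
    have hzf : zFull p k lamPlus lamMinus =
        PowerSeries.C (R := ℚ_[p]) ((p : ℚ_[p]) ^ m) * (lamMinus ^ (k - 1) * lamPlus⁻¹ ^ (k - 1)) := by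
      unfold zFull
      rw [mul_assoc]
      congr 1
      rw [map_pow, map_natCast]
    rw [hzf, PowerSeries.coeff_C_mul, norm_mul, norm_pow, Padic.norm_p]
    have hei : eR p i ≤ m := Nat.div_le_div_right hi
    calc ((p:ℝ)⁻¹) ^ m * ‖PowerSeries.coeff (R := ℚ_[p]) i (lamMinus ^ (k - 1) * lamPlus⁻¹ ^ (k - 1))‖
        ≤ ((p:ℝ)⁻¹) ^ m * (p:ℝ) ^ (eR p i) :=
          mul_le_mul_of_nonneg_left (hw i) (by positivity)
      _ ≤ ((p:ℝ)⁻¹) ^ m * (p:ℝ) ^ m :=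
          mul_le_mul_of_nonneg_left (pow_le_pow_right₀ aux_hp1 hei) (by positivity)
      _ = 1 := by
          rw [← mul_pow, inv_mul_cancel₀ (ne_of_gt hppos), one_pow]
  refine ⟨key, ?_⟩
  intro n
  unfold zSeries
  rw [PowerSeries.coeff_mk]
  split
  · next h => exact key n h
  · simp
end
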